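/- arXiv:2011.09620 — 4 statements merged into one kernel-verified Lean document; each statement's English description precedes it below -/
import Mathlib

section
/- On the closed interval [V_q⁺ − ε_q⁺/2, V_q⁺ + ε_q⁺/2], the function h(Δv) = q̄(Δv)·((V_q⁺ − ε_q⁺/2) − Δv)/ε_q⁺ (the middle droop segment of the Volt-Var curve) is Lipschitz continuous with Lipschitz constant C_q = (p̄/ε_p)/√(1/μ² − 1) + q_lim/ε_q⁺. -/
/-- The Volt-Watt control function. -/
noncomputable def voltWatt (pbar εp Vp : ℝ) (Δv : ℝ) : ℝ :=
  if Δv ≤ Vp - εp / 2 then pbar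
  else if Δv < Vp + εp / 2 then (pbar / εp) * ((Vp + εp / 2) - Δv)
  else 0

/-- The available reactive power function. -/
noncomputable def qBar (s qlim pbar εp Vp : ℝ) (Δv : ℝ) : ℝ :=
  min qlim (Real.sqrt (s ^ 2 - (voltWatt pbar εp Vp Δv) ^ 2))

lemma vw_bounds (pbar εp Vp : ℝ) (hp : 0 < pbar) (hε : 0 < εp) (x : ℝ) :
    0 ≤ voltWatt pbar εp Vp x ∧ voltWatt pbar εp Vp x ≤ pbar := by
  have hk : pbar / εp * εp = pbar := by field_simp
  have hk0 : 0 ≤ pbar / εp := by positivity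
  unfold voltWatt
  split_ifs with h1 h2 <;> constructor <;> nlinarith

lemma vw_anti_lip (pbar εp Vp : ℝ) (hp : 0 < pbar) (hε : 0 < εp) (u w : ℝ) (huw : u ≤ w) :
    voltWatt pbar εp Vp w ≤ voltWatt pbar εp Vp u ∧
    voltWatt pbar εp Vp u - voltWatt pbar εp Vp w ≤ pbar / εp * (w - u) := by
  have hk : pbar / εp * εp = pbar := by field_simp
  have hk0 : 0 ≤ pbar / εp := by positivity
  unfold voltWatt
  split_ifs with h1 h2 h3 h4 h5 h6 h7 <;> constructor <;> nlinarith

lemma vw_lip (pbar εp Vp : ℝ) (hp : 0 < pbar) (hε : 0 < εp) (u w : ℝ) :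
    |voltWatt pbar εp Vp u - voltWatt pbar εp Vp w| ≤ pbar / εp * |u - w| := by
  rcases le_total u w with h | h
  · obtain ⟨h1, h2⟩ := vw_anti_lip pbar εp Vp hp hε u w h
    rw [abs_of_nonneg (by linarith), abs_of_nonpos (by linarith)]
    linarith
  · obtain ⟨h1, h2⟩ := vw_anti_lip pbar εp Vp hp hε w u h
    rw [abs_of_nonpos (by linarith), abs_of_nonneg (by linarith)]
    linarith

lemma qbar_lip (s μ εp Vp qlim pbar : ℝ)
    (hs : 0 < s) (hμ0 : 0 < μ) (hμ1 : μ < 1) (hε : 0 < εp)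
    (hpbar : pbar = μ * s) (u w : ℝ) :
    |qBar s qlim pbar εp Vp u - qBar s qlim pbar εp Vp w| ≤
      (pbar / εp) / Real.sqrt (1 / μ ^ 2 - 1) * |u - w| := by
  have hp : 0 < pbar := by rw [hpbar]; positivity
  obtain ⟨hfu0, hfu1⟩ := vw_bounds pbar εp Vp hp hε u
  obtain ⟨hfw0, hfw1⟩ := vw_bounds pbar εp Vp hp hε w
  have hflip := vw_lip pbar εp Vp hp hε u w
  set fu := voltWatt pbar εp Vp u with hfu
  set fw := voltWatt pbar εp Vp w with hfw
  set t := Real.sqrt (1 - μ ^ 2) with ht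
  have htpos : 0 < t := Real.sqrt_pos.mpr (by nlinarith)
  have ht2 : t ^ 2 = 1 - μ ^ 2 := Real.sq_sqrt (by nlinarith)
  have hsq : Real.sqrt (1 / μ ^ 2 - 1) = t / μ := by
    have h1 : 1 / μ ^ 2 - 1 = (1 - μ ^ 2) / μ ^ 2 := by field_simp
    rw [h1, Real.sqrt_div (by nlinarith : (0:ℝ) ≤ 1 - μ ^ 2),
      Real.sqrt_sq hμ0.le]
  rw [hsq]
  have ha0 : (0:ℝ) ≤ s ^ 2 - fu ^ 2 := by nlinarith
  have hb0 : (0:ℝ) ≤ s ^ 2 - fw ^ 2 := by nlinarith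
  set A := Real.sqrt (s ^ 2 - fu ^ 2) with hA
  set B := Real.sqrt (s ^ 2 - fw ^ 2) with hB
  have hA2 : A ^ 2 = s ^ 2 - fu ^ 2 := Real.sq_sqrt ha0
  have hB2 : B ^ 2 = s ^ 2 - fw ^ 2 := Real.sq_sqrt hb0
  have hAnn : 0 ≤ A := Real.sqrt_nonneg _
  have hBnn : 0 ≤ B := Real.sqrt_nonneg _
  have hst : s * t = Real.sqrt (s ^ 2 * (1 - μ ^ 2)) := by
    rw [Real.sqrt_mul (by positivity), Real.sqrt_sq hs.le]
  have hAge : s * t ≤ A := by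
    rw [hst]; apply Real.sqrt_le_sqrt; nlinarith
  have hBge : s * t ≤ B := by
    rw [hst]; apply Real.sqrt_le_sqrt; nlinarith
  have hstpos : 0 < s * t := by positivity
  have hABmul : |A - B| * (A + B) = |fw ^ 2 - fu ^ 2| := by
    rw [← abs_of_nonneg (by linarith : (0:ℝ) ≤ A + B), ← abs_mul]
    congr 1; linear_combination hA2 - hB2
  have hfwfu : |fw ^ 2 - fu ^ 2| ≤ 2 * pbar * (pbar / εp * |u - w|) := by
    have h1 : |fw ^ 2 - fu ^ 2| = |fw + fu| * |fw - fu| := by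
      rw [← abs_mul]; ring_nf
    rw [h1]
    have h2 : |fw + fu| ≤ 2 * pbar := by rw [abs_of_nonneg (by linarith)]; linarith
    have h3 : |fw - fu| ≤ pbar / εp * |u - w| := by rwa [abs_sub_comm]
    exact mul_le_mul h2 h3 (abs_nonneg _) (by positivity)
  have hABle : |A - B| ≤ pbar / εp / (t / μ) * |u - w| := by
    have key : |A - B| * (2 * (s * t)) ≤ 2 * pbar * (pbar / εp * |u - w|) := by
      calc |A - B| * (2 * (s * t)) ≤ |A - B| * (A + B) := by
            apply mul_le_mul_of_nonneg_left (by linarith) (abs_nonneg _)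
        _ = |fw ^ 2 - fu ^ 2| := hABmul
        _ ≤ _ := hfwfu
    have heq : pbar / εp / (t / μ) * |u - w| * (2 * (s * t)) = 2 * pbar * (pbar / εp * |u - w|) := by
      rw [hpbar]; field_simp
    have key2 : |A - B| * (2 * (s * t)) ≤ pbar / εp / (t / μ) * |u - w| * (2 * (s * t)) := by
      rw [heq]; exact key
    exact le_of_mul_le_mul_right key2 (by positivity)
  calc |qBar s qlim pbar εp Vp u - qBar s qlim pbar εp Vp w| = |min qlim A - min qlim B| := rfl
    _ ≤ max (|qlim - qlim|) (|A - B|) := abs_min_sub_min_le_max _ _ _ _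
    _ = |A - B| := by rw [sub_self, abs_zero]; exact max_eq_right (abs_nonneg _)
    _ ≤ _ := hABle

theorem middle_droop_segment_lipschitz (s μ εp Vp qlim pbar Vqp εqp : ℝ)
    (hs : 0 < s) (hμ0 : 0 < μ) (hμ1 : μ < 1) (hε : 0 < εp) (hV : 0 < Vp - εp / 2)
    (hpbar : pbar = μ * s) (hq : 0 < qlim)
    (hVqp : 0 < Vqp) (hεqp : 0 < εqp) (hVqp' : 0 < Vqp - εqp / 2) :
    ∀ u ∈ Set.Icc (Vqp - εqp / 2) (Vqp + εqp / 2),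
    ∀ w ∈ Set.Icc (Vqp - εqp / 2) (Vqp + εqp / 2),
      |qBar s qlim pbar εp Vp u * ((Vqp - εqp / 2) - u) / εqp -
        qBar s qlim pbar εp Vp w * ((Vqp - εqp / 2) - w) / εqp| ≤
      ((pbar / εp) / Real.sqrt (1 / μ ^ 2 - 1) + qlim / εqp) * |u - w| := by
  intro u hu w hw
  obtain ⟨hu1, hu2⟩ := hu
  obtain ⟨hw1, hw2⟩ := hw
  have hp : 0 < pbar := by rw [hpbar]; positivity
  set L := (pbar / εp) / Real.sqrt (1 / μ ^ 2 - 1) with hL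
  have hL0 : 0 ≤ L := by positivity
  set qu := qBar s qlim pbar εp Vp u with hqu
  set qw := qBar s qlim pbar εp Vp w with hqw
  have hqlip : |qu - qw| ≤ L * |u - w| := qbar_lip s μ εp Vp qlim pbar hs hμ0 hμ1 hε hpbar u w
  have hqw0 : 0 ≤ qw := le_min hq.le (Real.sqrt_nonneg _)
  have hqw1 : qw ≤ qlim := min_le_left _ _
  have hcu : |(Vqp - εqp / 2) - u| ≤ εqp := by rw [abs_le]; constructor <;> [linarith; linarith]
  have hwu : |w - u| = |u - w| := abs_sub_comm _ _
  have hsplit : qu * ((Vqp - εqp / 2) - u) / εqp - qw * ((Vqp - εqp / 2) - w) / εqp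
      = ((qu - qw) * ((Vqp - εqp / 2) - u) + qw * (w - u)) / εqp := by ring
  rw [hsplit, abs_div, abs_of_pos hεqp, div_le_iff₀ hεqp]
  have h1 : |(qu - qw) * ((Vqp - εqp / 2) - u) + qw * (w - u)| ≤ |qu - qw| * |(Vqp - εqp / 2) - u| + qw * |u - w| := by
    calc |(qu - qw) * ((Vqp - εqp / 2) - u) + qw * (w - u)| ≤ |(qu - qw) * ((Vqp - εqp / 2) - u)| + |qw * (w - u)| :=
          abs_add_le _ _
      _ = |qu - qw| * |(Vqp - εqp / 2) - u| + qw * |u - w| := by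
          rw [abs_mul, abs_mul, abs_of_nonneg hqw0, hwu]
  have h2 : |qu - qw| * |(Vqp - εqp / 2) - u| ≤ L * |u - w| * εqp :=
    mul_le_mul hqlip hcu (abs_nonneg _) (by positivity)
  have h3 : qw * |u - w| ≤ qlim * |u - w| :=
    mul_le_mul_of_nonneg_right hqw1 (abs_nonneg _)
  have hexp : (L + qlim / εqp) * |u - w| * εqp = L * |u - w| * εqp + qlim * |u - w| := by
    field_simp
  rw [hexp]
  linarith
end

section
/- The Volt-Var control function f_q is Lipschitz continuous on ℝ with Lipschitz constant C_q = (p̄/ε_p)/√(1/μ² − 1) + q_lim/ε_q⁺; that is, |f_q(u) − f_q(w)| ≤ C_q·|u − w| for all real u, w. -/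
set_option maxHeartbeats 1000000

/-- The Volt-Var control function. -/
noncomputable def voltVar (s qlim pbar εp Vp Vqp Vqm εqp εqm : ℝ) (Δv : ℝ) : ℝ :=
  if Δv ≤ Vqm - εqm / 2 then qBar s qlim pbar εp Vp Δv
  else if Δv < Vqm + εqm / 2 then
    (qBar s qlim pbar εp Vp Δv / εqm) * ((Vqm + εqm / 2) - Δv)
  else if Δv ≤ Vqp - εqp / 2 then 0
  else if Δv < Vqp + εqp / 2 then
    (qBar s qlim pbar εp Vp Δv / εqp) * ((Vqp - εqp / 2) - Δv)
  else -qBar s qlim pbar εp Vp Δv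

/-! Auxiliary material for the Lipschitz proof. -/

lemma lip_max (a x y : ℝ) : |max a x - max a y| ≤ |x - y| := by
  simpa using abs_max_sub_max_le_max a x a y

lemma lip_min (a x y : ℝ) : |min a x - min a y| ≤ |x - y| := by
  simpa using abs_min_sub_min_le_max a x a y

/-- voltWatt as clamp. -/
lemma voltWatt_eq (pbar εp Vp : ℝ) (hε : 0 < εp) (x : ℝ) :
    voltWatt pbar εp Vp x = (pbar / εp) * max 0 (min εp ((Vp + εp / 2) - x)) := by
  unfold voltWatt
  split_ifs with h1 h2
  · rw [min_eq_left (by linarith), max_eq_right hε.le, div_mul_cancel₀]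
    exact hε.ne'
  · rw [min_eq_right (by linarith), max_eq_right (by linarith)]
  · rw [min_eq_right (by linarith), max_eq_left (by linarith), mul_zero]

lemma voltWatt_nonneg (pbar εp Vp : ℝ) (hp : 0 ≤ pbar) (hε : 0 < εp) (x : ℝ) :
    0 ≤ voltWatt pbar εp Vp x := by
  rw [voltWatt_eq _ _ _ hε]
  exact mul_nonneg (div_nonneg hp hε.le) (le_max_left _ _)

lemma voltWatt_le (pbar εp Vp : ℝ) (hp : 0 ≤ pbar) (hε : 0 < εp) (x : ℝ) :
    voltWatt pbar εp Vp x ≤ pbar := by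
  rw [voltWatt_eq _ _ _ hε]
  have h1 : max 0 (min εp ((Vp + εp / 2) - x)) ≤ εp :=
    max_le hε.le (min_le_left _ _)
  calc (pbar / εp) * max 0 (min εp ((Vp + εp / 2) - x)) ≤ (pbar / εp) * εp :=
        mul_le_mul_of_nonneg_left h1 (div_nonneg hp hε.le)
    _ = pbar := div_mul_cancel₀ _ hε.ne'

lemma voltWatt_lip (pbar εp Vp : ℝ) (hp : 0 ≤ pbar) (hε : 0 < εp) (u w : ℝ) :
    |voltWatt pbar εp Vp u - voltWatt pbar εp Vp w| ≤ (pbar / εp) * |u - w| := by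
  rw [voltWatt_eq _ _ _ hε, voltWatt_eq _ _ _ hε, ← mul_sub, abs_mul,
    abs_of_nonneg (div_nonneg hp hε.le)]
  refine mul_le_mul_of_nonneg_left ?_ (div_nonneg hp hε.le)
  calc |max 0 (min εp ((Vp + εp / 2) - u)) - max 0 (min εp ((Vp + εp / 2) - w))|
      ≤ |min εp ((Vp + εp / 2) - u) - min εp ((Vp + εp / 2) - w)| := lip_max _ _ _
    _ ≤ |((Vp + εp / 2) - u) - ((Vp + εp / 2) - w)| := lip_min _ _ _
    _ = |u - w| := by rw [abs_sub_comm]; ring_nf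

lemma sqrt_lip_ord (s μ p p' : ℝ) (hs : 0 < s) (hμ0 : 0 < μ) (hμ1 : μ < 1)
    (hp0 : 0 ≤ p) (hp : p ≤ μ * s) (hp'0 : 0 ≤ p') (hp' : p' ≤ μ * s) (hle : p ≤ p') :
    Real.sqrt (s ^ 2 - p ^ 2) - Real.sqrt (s ^ 2 - p' ^ 2) ≤
      (μ / Real.sqrt (1 - μ ^ 2)) * (p' - p) := by
  set T := Real.sqrt (1 - μ ^ 2) with hT
  have hμ2 : 0 < 1 - μ ^ 2 := by nlinarith
  have hT0 : 0 < T := Real.sqrt_pos.2 hμ2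
  have hT2 : T ^ 2 = 1 - μ ^ 2 := Real.sq_sqrt hμ2.le
  set SA := Real.sqrt (s ^ 2 - p ^ 2) with hSA
  set SB := Real.sqrt (s ^ 2 - p' ^ 2) with hSB
  have hA0 : 0 ≤ s ^ 2 - p ^ 2 := by nlinarith
  have hB0 : 0 ≤ s ^ 2 - p' ^ 2 := by nlinarith
  have hSA2 : SA ^ 2 = s ^ 2 - p ^ 2 := Real.sq_sqrt hA0
  have hSB2 : SB ^ 2 = s ^ 2 - p' ^ 2 := Real.sq_sqrt hB0
  have hSA0 : 0 ≤ SA := Real.sqrt_nonneg _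
  have hSB0 : 0 ≤ SB := Real.sqrt_nonneg _
  have hSBl : s * T ≤ SB := by
    have : Real.sqrt ((s * T) ^ 2) ≤ SB := by
      apply Real.sqrt_le_sqrt
      nlinarith
    rwa [Real.sqrt_sq (by positivity)] at this
  have hd : 0 ≤ p' - p := sub_nonneg.2 hle
  have e1 : (T * SA) ^ 2 = (1 - μ ^ 2) * (s ^ 2 - p ^ 2) := by rw [mul_pow, hT2, hSA2]
  have e2 : (T * SB) ^ 2 = (1 - μ ^ 2) * (s ^ 2 - p' ^ 2) := by rw [mul_pow, hT2, hSB2]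
  have hY : (1 - μ ^ 2) * s ≤ T * SB := by
    have := mul_le_mul_of_nonneg_left hSBl hT0.le
    nlinarith
  have f1 : 2 * (μ * (p' - p)) * ((1 - μ ^ 2) * s) ≤ 2 * (μ * (p' - p)) * (T * SB) :=
    mul_le_mul_of_nonneg_left hY (by positivity)
  have f2 : (1 - μ ^ 2) * ((p' - p) * (p + p')) ≤ (1 - μ ^ 2) * ((p' - p) * (2 * (μ * s))) :=
    mul_le_mul_of_nonneg_left (mul_le_mul_of_nonneg_left (by linarith) hd) hμ2.le
  have hsq : (T * SA) ^ 2 ≤ (T * SB + μ * (p' - p)) ^ 2 := by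
    nlinarith [sq_nonneg (μ * (p' - p))]
  have key : T * SA ≤ T * SB + μ * (p' - p) := by
    have h1 : Real.sqrt ((T * SA) ^ 2) ≤ Real.sqrt ((T * SB + μ * (p' - p)) ^ 2) :=
      Real.sqrt_le_sqrt hsq
    rwa [Real.sqrt_sq (by positivity), Real.sqrt_sq (by positivity)] at h1
  rw [div_mul_eq_mul_div, le_div_iff₀ hT0]
  linarith [key]

lemma sqrt_lip (s μ p p' : ℝ) (hs : 0 < s) (hμ0 : 0 < μ) (hμ1 : μ < 1)
    (hp0 : 0 ≤ p) (hp : p ≤ μ * s) (hp'0 : 0 ≤ p') (hp' : p' ≤ μ * s) :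
    |Real.sqrt (s ^ 2 - p ^ 2) - Real.sqrt (s ^ 2 - p' ^ 2)| ≤
      (μ / Real.sqrt (1 - μ ^ 2)) * |p - p'| := by
  rcases le_total p p' with h | h
  · have hmono : Real.sqrt (s ^ 2 - p' ^ 2) ≤ Real.sqrt (s ^ 2 - p ^ 2) :=
      Real.sqrt_le_sqrt (by nlinarith)
    rw [abs_of_nonneg (sub_nonneg.2 hmono), abs_sub_comm p p',
      abs_of_nonneg (sub_nonneg.2 h)]
    exact sqrt_lip_ord s μ p p' hs hμ0 hμ1 hp0 hp hp'0 hp' h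
  · have hmono : Real.sqrt (s ^ 2 - p ^ 2) ≤ Real.sqrt (s ^ 2 - p' ^ 2) :=
      Real.sqrt_le_sqrt (by nlinarith)
    rw [abs_sub_comm, abs_of_nonneg (sub_nonneg.2 hmono), abs_of_nonneg (sub_nonneg.2 h)]
    exact sqrt_lip_ord s μ p' p hs hμ0 hμ1 hp'0 hp' hp0 hp h

/-- The two clamp pieces of the Volt-Var shape function. -/
noncomputable def gmFun (Vqm εqm : ℝ) (x : ℝ) : ℝ :=
  max 0 (min 1 (((Vqm + εqm / 2) - x) / εqm))

noncomputable def gpFun (Vqp εqp : ℝ) (x : ℝ) : ℝ :=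
  max (-1) (min 0 (((Vqp - εqp / 2) - x) / εqp))

lemma gmFun_mem (Vqm εqm x : ℝ) : 0 ≤ gmFun Vqm εqm x ∧ gmFun Vqm εqm x ≤ 1 :=
  ⟨le_max_left _ _, max_le zero_le_one (min_le_left _ _)⟩

lemma gpFun_mem (Vqp εqp x : ℝ) : -1 ≤ gpFun Vqp εqp x ∧ gpFun Vqp εqp x ≤ 0 :=
  ⟨le_max_left _ _, max_le (by norm_num) (min_le_left _ _)⟩

lemma gmFun_lip (Vqm εqm : ℝ) (hε : 0 < εqm) (u w : ℝ) :
    |gmFun Vqm εqm u - gmFun Vqm εqm w| ≤ |u - w| / εqm := by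
  unfold gmFun
  calc |max 0 (min 1 (((Vqm + εqm / 2) - u) / εqm)) -
        max 0 (min 1 (((Vqm + εqm / 2) - w) / εqm))|
      ≤ |min 1 (((Vqm + εqm / 2) - u) / εqm) - min 1 (((Vqm + εqm / 2) - w) / εqm)| :=
        lip_max _ _ _
    _ ≤ |((Vqm + εqm / 2) - u) / εqm - ((Vqm + εqm / 2) - w) / εqm| := lip_min _ _ _
    _ = |u - w| / εqm := by
        rw [div_sub_div_same, show ((Vqm + εqm / 2) - u) - ((Vqm + εqm / 2) - w) = -(u - w)
          by ring, abs_div, abs_neg, abs_of_pos hε]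

lemma gpFun_lip (Vqp εqp : ℝ) (hε : 0 < εqp) (u w : ℝ) :
    |gpFun Vqp εqp u - gpFun Vqp εqp w| ≤ |u - w| / εqp := by
  unfold gpFun
  calc |max (-1) (min 0 (((Vqp - εqp / 2) - u) / εqp)) -
        max (-1) (min 0 (((Vqp - εqp / 2) - w) / εqp))|
      ≤ |min 0 (((Vqp - εqp / 2) - u) / εqp) - min 0 (((Vqp - εqp / 2) - w) / εqp)| :=
        lip_max _ _ _
    _ ≤ |((Vqp - εqp / 2) - u) / εqp - ((Vqp - εqp / 2) - w) / εqp| := lip_min _ _ _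
    _ = |u - w| / εqp := by
        rw [div_sub_div_same, show ((Vqp - εqp / 2) - u) - ((Vqp - εqp / 2) - w) = -(u - w)
          by ring, abs_div, abs_neg, abs_of_pos hε]

lemma gmFun_zero (Vqm εqm x : ℝ) (hε : 0 < εqm) (h : Vqm + εqm / 2 ≤ x) :
    gmFun Vqm εqm x = 0 := by
  unfold gmFun
  have h1 : ((Vqm + εqm / 2) - x) / εqm ≤ 0 :=
    div_nonpos_iff.mpr (Or.inr ⟨by linarith, hε.le⟩)
  rw [min_eq_right (by linarith), max_eq_left h1]

lemma gpFun_zero (Vqp εqp x : ℝ) (hε : 0 < εqp) (h : x ≤ Vqp - εqp / 2) :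
    gpFun Vqp εqp x = 0 := by
  unfold gpFun
  have h1 : 0 ≤ ((Vqp - εqp / 2) - x) / εqp := div_nonneg (by linarith) hε.le
  rw [min_eq_left h1, max_eq_right (by norm_num)]

/-- Volt-Var as product of `qBar` and the shape function. -/
lemma voltVar_eq (s qlim pbar εp Vp Vqp Vqm εqp εqm : ℝ)
    (hεp : 0 < εqp) (hεm : 0 < εqm)
    (hVqp' : 0 < Vqp - εqp / 2) (hVqm' : Vqm + εqm / 2 < 0) (x : ℝ) :
    voltVar s qlim pbar εp Vp Vqp Vqm εqp εqm x =
      qBar s qlim pbar εp Vp x * (gmFun Vqm εqm x + gpFun Vqp εqp x) := by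
  unfold voltVar gmFun gpFun
  split_ifs with h1 h2 h3 h4
  · rw [min_eq_left ((one_le_div hεm).2 (by linarith)),
      max_eq_right zero_le_one,
      min_eq_left (div_nonneg (by linarith) hεp.le),
      max_eq_right (by norm_num)]
    ring
  · rw [min_eq_right ((div_le_one hεm).2 (by linarith)),
      max_eq_right (div_nonneg (by linarith) hεm.le),
      min_eq_left (div_nonneg (by linarith) hεp.le),
      max_eq_right (by norm_num)]
    ring
  · rw [min_eq_right (by
        calc ((Vqm + εqm / 2) - x) / εqm ≤ 0 :=
          div_nonpos_iff.mpr (Or.inr ⟨by linarith, hεm.le⟩)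
        _ ≤ 1 := zero_le_one),
      max_eq_left (div_nonpos_iff.mpr (Or.inr ⟨by linarith, hεm.le⟩)),
      min_eq_left (div_nonneg (by linarith) hεp.le),
      max_eq_right (by norm_num)]
    ring
  · rw [min_eq_right (by
        calc ((Vqm + εqm / 2) - x) / εqm ≤ 0 :=
          div_nonpos_iff.mpr (Or.inr ⟨by linarith, hεm.le⟩)
        _ ≤ 1 := zero_le_one),
      max_eq_left (div_nonpos_iff.mpr (Or.inr ⟨by linarith, hεm.le⟩)),
      min_eq_right (div_nonpos_iff.mpr (Or.inr ⟨by linarith, hεp.le⟩)),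
      max_eq_right ((le_div_iff₀ hεp).2 (by linarith))]
    ring
  · rw [min_eq_right (by
        calc ((Vqm + εqm / 2) - x) / εqm ≤ 0 :=
          div_nonpos_iff.mpr (Or.inr ⟨by linarith, hεm.le⟩)
        _ ≤ 1 := zero_le_one),
      max_eq_left (div_nonpos_iff.mpr (Or.inr ⟨by linarith, hεm.le⟩)),
      min_eq_right (by
        calc ((Vqp - εqp / 2) - x) / εqp ≤ -1 := (div_le_iff₀ hεp).2 (by linarith)
        _ ≤ 0 := by norm_num),
      max_eq_left ((div_le_iff₀ hεp).2 (by linarith))]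
    ring

theorem voltVar_lipschitz (s μ εp Vp qlim pbar Vqp Vqm εqp εqm : ℝ)
    (hs : 0 < s) (hμ0 : 0 < μ) (hμ1 : μ < 1) (hε : 0 < εp) (hV : 0 < Vp - εp / 2)
    (hpbar : pbar = μ * s) (hq : 0 < qlim)
    (hVqp : 0 < Vqp) (hVqm : Vqm < 0) (hεqp : 0 < εqp) (hεqm : εqp ≤ εqm)
    (hVqp' : 0 < Vqp - εqp / 2) (hVqm' : Vqm + εqm / 2 < 0) :
    ∀ u w : ℝ,
      |voltVar s qlim pbar εp Vp Vqp Vqm εqp εqm u -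
        voltVar s qlim pbar εp Vp Vqp Vqm εqp εqm w| ≤
      ((pbar / εp) / Real.sqrt (1 / μ ^ 2 - 1) + qlim / εqp) * |u - w| := by
  intro u w
  have hεm : 0 < εqm := lt_of_lt_of_le hεqp hεqm
  have hp0 : 0 ≤ pbar := by rw [hpbar]; positivity
  set T := Real.sqrt (1 - μ ^ 2) with hT
  have hμ2 : 0 < 1 - μ ^ 2 := by nlinarith
  have hT0 : 0 < T := Real.sqrt_pos.2 hμ2
  have hT2 : T ^ 2 = 1 - μ ^ 2 := Real.sq_sqrt hμ2.le
  -- the shape function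
  set G := fun x : ℝ => gmFun Vqm εqm x + gpFun Vqp εqp x with hG
  set Q := fun x : ℝ => qBar s qlim pbar εp Vp x with hQ
  -- bounds on Q and G
  have hQ0 : ∀ x, 0 ≤ Q x := fun x => le_min hq.le (Real.sqrt_nonneg _)
  have hQle : ∀ x, Q x ≤ qlim := fun x => min_le_left _ _
  have hGabs : ∀ x, |G x| ≤ 1 := by
    intro x
    have h1 := gmFun_mem Vqm εqm x
    have h2 := gpFun_mem Vqp εqp x
    rw [abs_le]
    constructor <;> simp only [hG] <;> [linarith [h1.1, h2.1]; linarith [h1.2, h2.2]]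
  -- Lipschitz bound for G
  have hGlip' : ∀ a b : ℝ, a ≤ b → |G a - G b| ≤ |a - b| / εqp := by
    intro a b hab
    have hmm : |a - b| / εqm ≤ |a - b| / εqp :=
      div_le_div_of_nonneg_left (abs_nonneg _) hεqp hεqm
    rcases le_total b 0 with hb | hb
    · have ha0 : gpFun Vqp εqp a = 0 := gpFun_zero _ _ _ hεqp (by linarith)
      have hb0 : gpFun Vqp εqp b = 0 := gpFun_zero _ _ _ hεqp (by linarith)
      have := gmFun_lip Vqm εqm hεm a b
      simp only [hG, ha0, hb0, add_zero]
      linarith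
    · rcases le_total 0 a with ha | ha
      · have ha0 : gmFun Vqm εqm a = 0 := gmFun_zero _ _ _ hεm (by linarith)
        have hb0 : gmFun Vqm εqm b = 0 := gmFun_zero _ _ _ hεm (by linarith)
        have := gpFun_lip Vqp εqp hεqp a b
        simp only [hG, ha0, hb0, zero_add]
        linarith
      · -- a ≤ 0 ≤ b
        have hpa : gpFun Vqp εqp a = 0 := gpFun_zero _ _ _ hεqp (by linarith)
        have hp0' : gpFun Vqp εqp 0 = 0 := gpFun_zero _ _ _ hεqp (by linarith)
        have hm0 : gmFun Vqm εqm 0 = 0 := gmFun_zero _ _ _ hεm (by linarith)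
        have hmb : gmFun Vqm εqm b = 0 := gmFun_zero _ _ _ hεm (by linarith)
        have l1 := gmFun_lip Vqm εqm hεm a 0
        have l2 := gpFun_lip Vqp εqp hεqp 0 b
        have e1 : |a - 0| / εqm ≤ |a - 0| / εqp :=
          div_le_div_of_nonneg_left (abs_nonneg _) hεqp hεqm
        have habs : |a - 0| + |0 - b| = |a - b| := by
          rw [abs_of_nonpos (by linarith), abs_of_nonpos (by linarith),
            abs_of_nonpos (by linarith)]
          ring
        have heq : G a - G b = (gmFun Vqm εqm a - gmFun Vqm εqm 0) +
            (gpFun Vqp εqp 0 - gpFun Vqp εqp b) := by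
          simp only [hG, hpa, hmb, hm0, hp0']
          ring
        calc |G a - G b| ≤ |gmFun Vqm εqm a - gmFun Vqm εqm 0| +
              |gpFun Vqp εqp 0 - gpFun Vqp εqp b| := by rw [heq]; exact abs_add_le _ _
          _ ≤ |a - 0| / εqm + |0 - b| / εqp := add_le_add l1 l2
          _ ≤ |a - 0| / εqp + |0 - b| / εqp := by linarith
          _ = (|a - 0| + |0 - b|) / εqp := by ring
          _ = |a - b| / εqp := by rw [habs]
  have hGlip : |G u - G w| ≤ |u - w| / εqp := by
    rcases le_total u w with h | h
    · exact hGlip' u w h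
    · rw [abs_sub_comm, abs_sub_comm u w]; exact hGlip' w u h
  -- Lipschitz bound for Q
  have hQlip : |Q u - Q w| ≤ (μ / T) * ((pbar / εp) * |u - w|) := by
    have h1 : |Q u - Q w| ≤ |Real.sqrt (s ^ 2 - (voltWatt pbar εp Vp u) ^ 2) -
        Real.sqrt (s ^ 2 - (voltWatt pbar εp Vp w) ^ 2)| := lip_min _ _ _
    have h2 := sqrt_lip s μ (voltWatt pbar εp Vp u) (voltWatt pbar εp Vp w) hs hμ0 hμ1
      (voltWatt_nonneg _ _ _ hp0 hε u) (hpbar ▸ voltWatt_le _ _ _ hp0 hε u)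
      (voltWatt_nonneg _ _ _ hp0 hε w) (hpbar ▸ voltWatt_le _ _ _ hp0 hε w)
    have h3 := voltWatt_lip pbar εp Vp hp0 hε u w
    have hK : 0 ≤ μ / T := by positivity
    calc |Q u - Q w| ≤ (μ / T) * |voltWatt pbar εp Vp u - voltWatt pbar εp Vp w| :=
          h1.trans h2
      _ ≤ (μ / T) * ((pbar / εp) * |u - w|) := mul_le_mul_of_nonneg_left h3 hK
  -- rewrite the goal
  rw [voltVar_eq s qlim pbar εp Vp Vqp Vqm εqp εqm hεqp hεm hVqp' hVqm' u,
    voltVar_eq s qlim pbar εp Vp Vqp Vqm εqp εqm hεqp hεm hVqp' hVqm' w]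
  have hsqrtμ : Real.sqrt (1 / μ ^ 2 - 1) = T / μ := by
    have h : 1 / μ ^ 2 - 1 = (T / μ) ^ 2 := by
      rw [div_pow, hT2]
      field_simp
    rw [h, Real.sqrt_sq (by positivity)]
  have split : Q u * G u - Q w * G w = (Q u - Q w) * G u + Q w * (G u - G w) := by ring
  calc |Q u * G u - Q w * G w|
      ≤ |(Q u - Q w) * G u| + |Q w * (G u - G w)| := by rw [split]; exact abs_add_le _ _
    _ = |Q u - Q w| * |G u| + |Q w| * |G u - G w| := by rw [abs_mul, abs_mul]
    _ ≤ ((μ / T) * ((pbar / εp) * |u - w|)) * 1 + qlim * (|u - w| / εqp) := by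
        refine add_le_add (mul_le_mul hQlip (hGabs u) (abs_nonneg _) ?_)
          (mul_le_mul ((abs_of_nonneg (hQ0 w)).le.trans (hQle w)) hGlip (abs_nonneg _) hq.le)
        positivity
    _ = ((pbar / εp) / Real.sqrt (1 / μ ^ 2 - 1) + qlim / εqp) * |u - w| := by
        rw [hsqrtμ]
        field_simp
end

section
/- Let B be an m×m real symmetric positive semidefinite matrix all of whose entries are nonnegative, and let D = diag(d_1, …, d_m) with all d_i ≥ 0. Then every eigenvalue λ of the product DB is real, nonnegative, and satisfies λ ≤ max_i (d_i · r_i(B)), where r_i(B) = Σ_j B_{ij} is the i-th row sum of B. In particular, if d_i · r_i(B) < 2 for every i, then every eigenvalue of DB is strictly less than 2. -/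
open scoped Matrix ComplexOrder

theorem eigenvalues_of_diag_mul_psd (m : ℕ) (hm : 0 < m)
    (B : Matrix (Fin m) (Fin m) ℝ) (hBsym : B.IsSymm) (hBpsd : B.PosSemidef)
    (hBnn : ∀ i j, 0 ≤ B i j)
    (d : Fin m → ℝ) (hd : ∀ i, 0 ≤ d i)
    (lam : ℂ)
    (hlam : (((Matrix.diagonal d * B).map (algebraMap ℝ ℂ)).charpoly).IsRoot lam) :
    lam.im = 0 ∧ 0 ≤ lam.re ∧
      lam.re ≤ Finset.univ.sup'
        (⟨⟨0, hm⟩, Finset.mem_univ _⟩ : (Finset.univ : Finset (Fin m)).Nonempty)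
        (fun i => d i * ∑ j, B i j) ∧
      ((∀ i, d i * ∑ j, B i j < 2) → lam.re < 2) := by
  classical
  set f := algebraMap ℝ ℂ with hf
  set A := (Matrix.diagonal d * B).map f with hAdef
  -- from charpoly root to determinant zero
  have hdet : (Matrix.diagonal (fun _ : Fin m => lam) - A).det = 0 := by
    have h1 : A.charpoly.eval lam = (Matrix.diagonal (fun _ : Fin m => lam) - A).det := by
      rw [Matrix.charpoly]
      rw [show (Matrix.charmatrix A).det.eval lam
          = ((Matrix.charmatrix A).map (Polynomial.evalRingHom lam)).det from
        RingHom.map_det (Polynomial.evalRingHom lam) _]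
      congr 1
      ext i j
      by_cases hij : i = j
      · subst hij
        simp [Matrix.charmatrix_apply_eq]
      · simp [Matrix.charmatrix_apply_ne _ _ _ hij, Matrix.diagonal_apply_ne _ hij]
    rw [← h1]
    exact hlam
  obtain ⟨v, hv0, hv⟩ := Matrix.exists_mulVec_eq_zero_iff.mpr hdet
  have hAv : A *ᵥ v = lam • v := by
    rw [Matrix.sub_mulVec, sub_eq_zero] at hv
    rw [← hv]
    ext i
    simp [Matrix.mulVec_diagonal]
  -- set up complex matrices
  set B' := B.map f with hB'def
  set D' := Matrix.diagonal (fun i => (d i : ℂ)) with hD'def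
  have hAfact : A = D' * B' := by
    rw [hAdef, Matrix.map_mul, hB'def, hD'def, Matrix.diagonal_map (map_zero f)]
    rfl
  have hB'psd : B'.PosSemidef := by
    open scoped MatrixOrder Matrix.Norms.L2Operator in
    obtain ⟨C, hC⟩ := CStarAlgebra.nonneg_iff_eq_star_mul_self.mp hBpsd.nonneg
    have : B' = (C.map f)ᴴ * (C.map f) := by
      rw [hB'def, hC, Matrix.star_eq_conjTranspose, Matrix.map_mul,
        Matrix.conjTranspose_map f (fun a => (Complex.conj_ofReal a).symm)]
    rw [this]
    exact Matrix.posSemidef_conjTranspose_mul_self _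
  set w := B' *ᵥ v with hwdef
  set p := dotProduct (star v) w with hpdef
  have hp : 0 ≤ p := hB'psd.dotProduct_mulVec_nonneg v
  have hp_im : p.im = 0 := by
    have := hp
    rw [Complex.le_def] at this
    simpa using this.2.symm
  have hp_re : 0 ≤ p.re := by
    have := hp
    rw [Complex.le_def] at this
    simpa using this.1
  have hDw : D' *ᵥ w = lam • v := by
    rw [hwdef, Matrix.mulVec_mulVec, ← hAfact, hAv]
  -- q = lam * p
  have hq0 : 0 ≤ dotProduct (star w) (D' *ᵥ w) := by
    refine (Matrix.posSemidef_diagonal_iff.mpr ?_).dotProduct_mulVec_nonneg w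
    intro i
    exact_mod_cast hd i
  have hwv : dotProduct (star w) v = p := by
    have : dotProduct (star w) v = star p := by
      rw [hpdef]
      simp [dotProduct, map_sum, mul_comm]
    rw [this]
    rw [Complex.ext_iff] at *
    constructor <;> simp [hp_im]
  have hq : dotProduct (star w) (D' *ᵥ w) = lam * p := by
    rw [hDw, dotProduct_smul, hwv, smul_eq_mul]
  rw [hq, Complex.le_def] at hq0
  simp only [Complex.zero_re, Complex.zero_im, Complex.mul_re, Complex.mul_im, hp_im,
    mul_zero, zero_mul, add_zero, zero_add, sub_zero] at hq0
  -- realness and nonnegativity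
  have him : lam.im = 0 ∧ 0 ≤ lam.re := by
    by_cases hpz : p = 0
    · -- then w = 0 and lam = 0
      have hw0 : w = 0 := (hB'psd.dotProduct_mulVec_zero_iff v).mp (by rw [← hpdef]; exact hpz)
      have : lam • v = 0 := by rw [← hDw, hw0, Matrix.mulVec_zero]
      have hlam0 : lam = 0 := by
        by_contra hne
        exact hv0 (by simpa [hne] using congrArg (fun u => lam⁻¹ • u) this)
      simp [hlam0]
    · have hpre : 0 < p.re := by
        rcases lt_or_eq_of_le hp_re with h | h
        · exact h
        · exact absurd (Complex.ext (h.symm) hp_im) hpz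
      constructor
      · have := hq0.2.symm
        rcases mul_eq_zero.mp this with h | h
        · exact h
        · exact absurd h (ne_of_gt hpre)
      · exact nonneg_of_mul_nonneg_right (by rw [mul_comm]; exact hq0.1) hpre
  refine ⟨him.1, him.2, ?_⟩
  -- Gershgorin bound
  have heig : Module.End.HasEigenvalue (Matrix.toLin' A) lam := by
    apply Module.End.hasEigenvalue_of_hasEigenvector (x := v)
    refine ⟨?_, hv0⟩
    rw [Module.End.mem_eigenspace_iff, Matrix.toLin'_apply, hAv]
  obtain ⟨k, hk⟩ := eigenvalue_mem_ball heig
  have hAij : ∀ i j, A i j = ((d i * B i j : ℝ) : ℂ) := by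
    intro i j
    rw [hAdef]
    simp [Matrix.map_apply, Matrix.diagonal_mul, hf, Complex.coe_algebraMap]
  have hbound : lam.re ≤ d k * ∑ j, B k j := by
    rw [Metric.mem_closedBall, dist_eq_norm] at hk
    have h1 : lam.re - d k * B k k ≤ ‖lam - A k k‖ := by
      calc lam.re - d k * B k k = (lam - A k k).re := by
            rw [hAij k k]; simp
        _ ≤ ‖lam - A k k‖ := Complex.re_le_norm _
    have h2 : (∑ j ∈ Finset.univ.erase k, ‖A k j‖) = ∑ j ∈ Finset.univ.erase k, d k * B k j := by
      refine Finset.sum_congr rfl fun j _ => ?_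
      rw [hAij k j, Complex.norm_real, Real.norm_eq_abs, abs_of_nonneg (mul_nonneg (hd k) (hBnn k j))]
    have h3 : lam.re ≤ d k * B k k + ∑ j ∈ Finset.univ.erase k, d k * B k j := by
      have := le_trans h1 hk
      rw [h2] at this
      linarith
    calc lam.re ≤ d k * B k k + ∑ j ∈ Finset.univ.erase k, d k * B k j := h3
      _ = ∑ j, d k * B k j := Finset.add_sum_erase Finset.univ (fun j => d k * B k j) (Finset.mem_univ k)
      _ = d k * ∑ j, B k j := by rw [Finset.mul_sum]
  have hsup : lam.re ≤ Finset.univ.sup'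
      (⟨⟨0, hm⟩, Finset.mem_univ _⟩ : (Finset.univ : Finset (Fin m)).Nonempty)
      (fun i => d i * ∑ j, B i j) :=
    le_trans hbound (Finset.le_sup' (fun i => d i * ∑ j, B i j) (Finset.mem_univ k))
  refine ⟨hsup, fun hlt => ?_⟩
  exact lt_of_le_of_lt hsup ((Finset.sup'_lt_iff _).mpr fun i _ => hlt i)
end

section
/- Let m be a positive natural number and let M, T, F be m×m real matrices with M and (I − T·Fᵀ) invertible. Define R = 2·M⁻¹·diag(r)·(I − T·Fᵀ)⁻¹·T and X = 2·M⁻¹·diag(x)·(I − T·Fᵀ)⁻¹·T for vectors r, x ∈ ℝ^m. Suppose vectors P, Q, p, q, v² ∈ ℝ^m and a scalar v₀ satisfy the loss-free DistFlow relations P = T·p + T·Fᵀ·P, Q = T·q + T·Fᵀ·Q, and M·(v² − v₀²·𝟙) = 2·(diag(r)·P + diag(x)·Q), where 𝟙 is the all-ones vector. Then v² = v₀²·𝟙 + R·p + X·q. -/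
open Matrix

theorem linearized_distflow (m : ℕ) (hm : 0 < m)
    (M T F : Matrix (Fin m) (Fin m) ℝ)
    (hM : IsUnit M.det) (hTF : IsUnit (1 - T * Fᵀ).det)
    (r x : Fin m → ℝ)
    (R X : Matrix (Fin m) (Fin m) ℝ)
    (hR : R = (2 : ℝ) • (M⁻¹ * Matrix.diagonal r * (1 - T * Fᵀ)⁻¹ * T))
    (hX : X = (2 : ℝ) • (M⁻¹ * Matrix.diagonal x * (1 - T * Fᵀ)⁻¹ * T))
    (P Q p q v2 : Fin m → ℝ) (v0 : ℝ)
    (hP : P = T.mulVec p + (T * Fᵀ).mulVec P)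
    (hQ : Q = T.mulVec q + (T * Fᵀ).mulVec Q)
    (hv : M.mulVec (v2 - fun _ => v0 ^ 2) =
      (2 : ℝ) • ((Matrix.diagonal r).mulVec P + (Matrix.diagonal x).mulVec Q)) :
    v2 = (fun _ => v0 ^ 2) + R.mulVec p + X.mulVec q := by
  have hPA : (1 - T * Fᵀ).mulVec P = T.mulVec p := by
    rw [sub_mulVec, one_mulVec]
    nth_rewrite 1 [hP]
    exact add_sub_cancel_right _ _
  have hQA : (1 - T * Fᵀ).mulVec Q = T.mulVec q := by
    rw [sub_mulVec, one_mulVec]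
    nth_rewrite 1 [hQ]
    exact add_sub_cancel_right _ _
  have hPe : P = ((1 - T * Fᵀ)⁻¹ * T).mulVec p := by
    rw [← mulVec_mulVec, ← hPA, mulVec_mulVec, nonsing_inv_mul _ hTF, one_mulVec]
  have hQe : Q = ((1 - T * Fᵀ)⁻¹ * T).mulVec q := by
    rw [← mulVec_mulVec, ← hQA, mulVec_mulVec, nonsing_inv_mul _ hTF, one_mulVec]
  have key : v2 - (fun _ => v0 ^ 2) = R.mulVec p + X.mulVec q := by
    have := congrArg (M⁻¹.mulVec) hv
    rw [mulVec_mulVec, nonsing_inv_mul _ hM, one_mulVec] at this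
    rw [this, hR, hX, hPe, hQe]
    simp only [smul_mulVec, mulVec_add, mulVec_smul, ← mulVec_mulVec, smul_add]
  have := key
  rw [sub_eq_iff_eq_add] at this
  rw [this]
  ext i
  simp [add_comm, add_assoc, add_left_comm]
end
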